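/- If λ = a + ib is a non-real complex number with a ≠ -1 and ξ is a nonzero real number, then Im ∫_ℝ w(v)/(viξ + 1 + λ) dv = -∫_ℝ (vξ + b) w(v)/((1+a)^2 + (vξ+b)^2) dv ≠ 0; consequently ω(λ,ξ) := 1 - ∫_ℝ w(v)/(viξ+1+λ) dv has no zeros with Im λ ≠ 0 in the half-planes Re λ > -1 or Re λ < -1. -/

import Mathlib

open MeasureTheory Real Filter Complex

noncomputable def w (v : ℝ) : ℝ := Real.exp (-v ^ 2) / Real.sqrt Real.pi

lemma w_pos (v : ℝ) : 0 < w v :=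
  div_pos (Real.exp_pos _) (Real.sqrt_pos.2 Real.pi_pos)

lemma integrable_w : Integrable w := by
  have h := (integrable_exp_neg_mul_sq (b := (1:ℝ)) one_pos).div_const (Real.sqrt Real.pi)
  exact (by simpa [neg_mul, one_mul] using h : Integrable (fun v : ℝ => Real.exp (-v ^ 2) / Real.sqrt Real.pi))

lemma F_bound (c : ℝ) (hc : 0 < c) (t : ℝ) : |t| / (c + t ^ 2) ≤ 1 / (2 * Real.sqrt c) := by
  have hs : 0 < Real.sqrt c := Real.sqrt_pos.2 hc
  rw [div_le_div_iff₀ (by positivity) (by positivity)]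
  nlinarith [two_mul_le_add_sq (Real.sqrt c) |t|, Real.sq_sqrt hc.le, _root_.sq_abs t]

lemma integrable_F (ξ b c : ℝ) (hc : 0 < c) :
    Integrable fun v => (v * ξ + b) * w v / (c + (v * ξ + b) ^ 2) := by
  have hd : ∀ t : ℝ, (0:ℝ) < c + t ^ 2 := fun t => by positivity
  refine Integrable.mono' (integrable_w.const_mul (1 / (2 * Real.sqrt c))) ?_ ?_
  · refine (Continuous.div ?_ ?_ fun v => (hd _).ne').aestronglyMeasurable
    · have : Continuous w := by unfold w; fun_prop
      fun_prop
    · fun_prop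
  · filter_upwards with v
    have h1 : ‖(v * ξ + b) * w v / (c + (v * ξ + b) ^ 2)‖
        = |v * ξ + b| / (c + (v * ξ + b) ^ 2) * w v := by
      rw [Real.norm_eq_abs, abs_div, abs_of_pos (hd _), abs_mul, abs_of_pos (w_pos v)]
      ring
    rw [h1]
    calc |v * ξ + b| / (c + (v * ξ + b) ^ 2) * w v
        ≤ 1 / (2 * Real.sqrt c) * w v :=
          mul_le_mul_of_nonneg_right (F_bound c hc _) (w_pos v).le
    _ = 1 / (2 * Real.sqrt c) * w v := rfl

lemma key_pos (ξ b c : ℝ) (hξ : ξ ≠ 0) (hb : 0 < b) (hc : 0 < c) :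
    0 < ∫ v : ℝ, (v * ξ + b) * w v / (c + (v * ξ + b) ^ 2) := by
  set v₀ : ℝ := -b / ξ with hv₀
  have hshift : (∫ v : ℝ, (v * ξ + b) * w v / (c + (v * ξ + b) ^ 2))
      = ∫ s : ℝ, (s * ξ) * w (s + v₀) / (c + (s * ξ) ^ 2) := by
    rw [← integral_add_right_eq_self
      (fun v => (v * ξ + b) * w v / (c + (v * ξ + b) ^ 2)) v₀]
    congr 1
    funext s
    have h : (s + v₀) * ξ + b = s * ξ := by
      rw [hv₀]; field_simp; ring
    rw [h]
  rw [hshift]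
  set G : ℝ → ℝ := fun s => (s * ξ) * w (s + v₀) / (c + (s * ξ) ^ 2) with hG
  have hGint : Integrable G := by
    have h := (integrable_F ξ b c hc).comp_add_right v₀
    refine h.congr ?_
    filter_upwards with s
    have hx : (s + v₀) * ξ + b = s * ξ := by
      rw [hv₀]; field_simp; ring
    simp only [hG, hx]
  have hsplit : ∫ s : ℝ, G s = ∫ s in Set.Ioi (0:ℝ), (G (-s) + G s) := by
    rw [← intervalIntegral.integral_Iic_add_Ioi (b := (0:ℝ)) hGint.integrableOn hGint.integrableOn]
    have h1 : (∫ s in Set.Iic (0:ℝ), G s) = ∫ s in Set.Ioi (0:ℝ), G (-s) := by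
      rw [integral_comp_neg_Ioi 0 G, neg_zero]
    rw [h1, ← integral_add ((hGint.comp_neg).integrableOn) hGint.integrableOn]
  rw [hsplit]
  have hHpos : ∀ s ∈ Set.Ioi (0:ℝ), 0 < G (-s) + G s := by
    intro s hs
    have hs' : (0:ℝ) < s := hs
    have hD : 0 < c + (s * ξ) ^ 2 := by positivity
    have hπ : 0 < Real.sqrt Real.pi := Real.sqrt_pos.2 Real.pi_pos
    have hEq : G (-s) + G s
        = s * ξ * (Real.exp (-(s + v₀) ^ 2) - Real.exp (-(-s + v₀) ^ 2))
          / (Real.sqrt Real.pi * (c + (s * ξ) ^ 2)) := by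
      simp only [hG, w]
      have hsq : (-s * ξ) ^ 2 = (s * ξ) ^ 2 := by ring
      rw [hsq]
      field_simp
      ring
    rw [hEq]
    apply div_pos _ (by positivity)
    rcases hξ.lt_or_gt with h | h
    · -- ξ < 0 hence v₀ > 0
      have hv : 0 < v₀ := by
        rw [hv₀]
        exact div_pos_of_neg_of_neg (by linarith) h
      have hexp : Real.exp (-(s + v₀) ^ 2) < Real.exp (-(-s + v₀) ^ 2) :=
        Real.exp_lt_exp.2 (by nlinarith)
      have h1 : s * ξ < 0 := mul_neg_of_pos_of_neg hs' h
      nlinarith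
    · -- ξ > 0 hence v₀ < 0
      have hv : v₀ < 0 := by
        rw [hv₀]
        exact div_neg_of_neg_of_pos (by linarith) h
      have hexp : Real.exp (-(-s + v₀) ^ 2) < Real.exp (-(s + v₀) ^ 2) :=
        Real.exp_lt_exp.2 (by nlinarith)
      have h1 : 0 < s * ξ := mul_pos hs' h
      nlinarith
  have hint : IntegrableOn (fun s => G (-s) + G s) (Set.Ioi (0:ℝ)) volume :=
    ((hGint.comp_neg).add hGint).integrableOn
  rw [setIntegral_pos_iff_support_of_nonneg_ae ?_ hint]
  · calc (0:ENNReal) < volume (Set.Ioi (0:ℝ)) := by simp [Real.volume_Ioi]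
      _ ≤ volume ((Function.support fun s => G (-s) + G s) ∩ Set.Ioi 0) :=
        measure_mono fun s hs => ⟨(hHpos s hs).ne', hs⟩
  · rw [EventuallyLE, ae_restrict_iff' measurableSet_Ioi]
    filter_upwards with s hs
    exact (hHpos s hs).le

lemma key_ne (ξ b c : ℝ) (hξ : ξ ≠ 0) (hb : b ≠ 0) (hc : 0 < c) :
    (∫ v : ℝ, (v * ξ + b) * w v / (c + (v * ξ + b) ^ 2)) ≠ 0 := by
  rcases hb.lt_or_gt with h | h
  · have hpt : ∀ v : ℝ, (v * ξ + b) * w v / (c + (v * ξ + b) ^ 2)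
        = -((v * (-ξ) + (-b)) * w v / (c + (v * (-ξ) + (-b)) ^ 2)) := by
      intro v
      have hsq : (v * (-ξ) + (-b)) ^ 2 = (v * ξ + b) ^ 2 := by ring
      rw [hsq, ← neg_div, neg_mul_eq_neg_mul]
      ring_nf
    simp_rw [hpt]
    rw [integral_neg]
    exact neg_ne_zero.2 (key_pos (-ξ) (-b) c (neg_ne_zero.2 hξ) (by linarith) hc).ne'
  · exact (key_pos ξ b c hξ h hc).ne'

/-- for λ = a + ib non-real with a ≠ -1 and ξ ≠ 0 real, the
imaginary part of ∫ w(v)/(viξ+1+λ) dv equals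
-∫ (vξ+b)w(v)/((1+a)²+(vξ+b)²) dv, which is nonzero; hence
ω(λ,ξ) = 1 - ∫ w(v)/(viξ+1+λ) dv ≠ 0. -/
theorem stmt9 (l : ℂ) (hb : l.im ≠ 0) (ha : l.re ≠ -1) (ξ : ℝ) (hξ : ξ ≠ 0) :
    (∫ v : ℝ, (w v : ℂ) / (v * Complex.I * ξ + 1 + l)).im =
      -∫ v : ℝ, (v * ξ + l.im) * w v / ((1 + l.re) ^ 2 + (v * ξ + l.im) ^ 2) ∧
    (∫ v : ℝ, (v * ξ + l.im) * w v / ((1 + l.re) ^ 2 + (v * ξ + l.im) ^ 2)) ≠ 0 ∧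
    (1 : ℂ) - ∫ v : ℝ, (w v : ℂ) / (v * Complex.I * ξ + 1 + l) ≠ 0 := by
  have ha' : (1 + l.re) ≠ 0 := fun h => ha (by linarith)
  have hc : 0 < (1 + l.re) ^ 2 := by positivity
  have hre : ∀ v : ℝ, ((v : ℂ) * Complex.I * ξ + 1 + l).re = 1 + l.re := by
    intro v; simp
  have him : ∀ v : ℝ, ((v : ℂ) * Complex.I * ξ + 1 + l).im = v * ξ + l.im := by
    intro v; simp
  have hznz : ∀ v : ℝ, ((v : ℂ) * Complex.I * ξ + 1 + l) ≠ 0 := by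
    intro v h
    apply ha'
    rw [← hre v, h, Complex.zero_re]
  have hnormsq : ∀ v : ℝ, Complex.normSq ((v : ℂ) * Complex.I * ξ + 1 + l)
      = (1 + l.re) ^ 2 + (v * ξ + l.im) ^ 2 := by
    intro v
    rw [Complex.normSq_apply, hre, him]
    ring
  -- integrability of the complex integrand
  have hfint : Integrable (fun v : ℝ => (w v : ℂ) / ((v : ℂ) * Complex.I * ξ + 1 + l)) := by
    refine Integrable.mono' (integrable_w.const_mul (1 / |1 + l.re|)) ?_ ?_
    · refine (Continuous.div ?_ ?_ hznz).aestronglyMeasurable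
      · have : Continuous w := by unfold w; fun_prop
        fun_prop
      · fun_prop
    · filter_upwards with v
      have habs : |1 + l.re| ≤ ‖(v : ℂ) * Complex.I * ξ + 1 + l‖ := by
        rw [← hre v]
        exact Complex.abs_re_le_norm _
    
      have habs' : 0 < |1 + l.re| := abs_pos.2 ha'
      rw [norm_div, Complex.norm_real, Real.norm_eq_abs, abs_of_pos (w_pos v)]
      calc w v / ‖(v : ℂ) * Complex.I * ξ + 1 + l‖
          ≤ w v / |1 + l.re| := div_le_div_of_nonneg_left (w_pos v).le habs' habs
        _ = 1 / |1 + l.re| * w v := by ring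
  -- the pointwise imaginary part
  have him_pt : ∀ v : ℝ, ((w v : ℂ) / ((v : ℂ) * Complex.I * ξ + 1 + l)).im
      = -((v * ξ + l.im) * w v / ((1 + l.re) ^ 2 + (v * ξ + l.im) ^ 2)) := by
    intro v
    rw [Complex.div_im, hre, him, hnormsq]
    simp only [Complex.ofReal_re, Complex.ofReal_im]
    ring
  have hImEq : (∫ v : ℝ, (w v : ℂ) / (v * Complex.I * ξ + 1 + l)).im =
      -∫ v : ℝ, (v * ξ + l.im) * w v / ((1 + l.re) ^ 2 + (v * ξ + l.im) ^ 2) := by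
    have h0 := integral_im (𝕜 := ℂ) hfint
    simp only [RCLike.im_eq_complex_im] at h0
    rw [← h0, ← integral_neg]
    exact integral_congr_ae (Filter.Eventually.of_forall fun v => him_pt v)
  have hJ : (∫ v : ℝ, (v * ξ + l.im) * w v / ((1 + l.re) ^ 2 + (v * ξ + l.im) ^ 2)) ≠ 0 :=
    key_ne ξ l.im ((1 + l.re) ^ 2) hξ hb hc
  refine ⟨hImEq, hJ, ?_⟩
  intro h
  rw [sub_eq_zero] at h
  have h2 : (∫ v : ℝ, (w v : ℂ) / (v * Complex.I * ξ + 1 + l)).im = ((1:ℂ)).im :=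
    congrArg Complex.im h.symm
  rw [Complex.one_im, hImEq] at h2
  exact hJ (neg_eq_zero.1 h2)
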